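/- Let N ≥ 1, α > 2, β > α - 2 and γ < -N/2 + α/2. Define A u(x) = (1+|x|^α) Δu(x) - |x|^β u(x) and φ(x) = (1+|x|^α)^{γ/α}. Then there exists a constant κ > 0 such that Aφ(x) ≤ κ φ(x) for all x ∈ ℝ^N. -/

import Mathlib

open Real Filter Asymptotics

-- squared-norm to rpow conversions
lemma sq_rpow_aux {N : ℕ} (y : EuclideanSpace ℝ (Fin N)) (p : ℝ) :
    ((‖y‖ ^ 2 : ℝ)) ^ p = ‖y‖ ^ (2 * p) := by
  rw [← Real.rpow_natCast ‖y‖ 2, ← Real.rpow_mul (norm_nonneg y)]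
  norm_num

lemma abs_apply_le {N : ℕ} (y : EuclideanSpace ℝ (Fin N)) (i : Fin N) : |y i| ≤ ‖y‖ := by
  rw [EuclideanSpace.norm_eq]
  calc |y i| = Real.sqrt (‖y i‖ ^ 2) := by
        rw [Real.sqrt_sq_eq_abs, Real.norm_eq_abs, abs_abs]
    _ ≤ Real.sqrt (∑ j, ‖y j‖ ^ 2) :=
        Real.sqrt_le_sqrt (Finset.single_le_sum (f := fun j => ‖y j‖ ^ 2) (fun j _ => sq_nonneg _) (Finset.mem_univ i))

-- first derivative of φ
lemma phi_hasFDerivAt {N : ℕ} {α γ : ℝ} (hα : 2 < α) (x : EuclideanSpace ℝ (Fin N)) :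
    HasFDerivAt (fun y : EuclideanSpace ℝ (Fin N) => (1 + ‖y‖ ^ α) ^ (γ / α))
      ((γ * ‖x‖ ^ (α - 2) * (1 + ‖x‖ ^ α) ^ (γ / α - 1)) • (innerSL ℝ x)) x := by
  have hα0 : (0:ℝ) < α := by linarith
  have hq : HasFDerivAt (fun y : EuclideanSpace ℝ (Fin N) => ‖y‖ ^ 2)
      (2 • (innerSL ℝ x)) x := (hasStrictFDerivAt_norm_sq x).hasFDerivAt
  have h1 : HasDerivAt (fun t : ℝ => t ^ (α / 2))
      ((α / 2) * (‖x‖ ^ 2 : ℝ) ^ (α / 2 - 1)) (‖x‖ ^ 2) :=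
    Real.hasDerivAt_rpow_const (Or.inr (by linarith))
  have h2 := h1.const_add 1
  have hpos : (0:ℝ) < 1 + (‖x‖ ^ 2 : ℝ) ^ (α / 2) := by positivity
  have h3 : HasDerivAt (fun s : ℝ => s ^ (γ / α))
      ((γ / α) * (1 + (‖x‖ ^ 2 : ℝ) ^ (α / 2)) ^ (γ / α - 1)) (1 + (‖x‖ ^ 2 : ℝ) ^ (α / 2)) :=
    Real.hasDerivAt_rpow_const (Or.inl hpos.ne')
  have h4 := (h3.comp (‖x‖ ^ 2) h2).comp_hasFDerivAt x hq
  have key : ∀ y : EuclideanSpace ℝ (Fin N), ((‖y‖ ^ 2 : ℝ)) ^ (α / 2) = ‖y‖ ^ α := by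
    intro y; rw [sq_rpow_aux]; ring_nf
  have key2 : ((‖x‖ ^ 2 : ℝ)) ^ (α / 2 - 1) = ‖x‖ ^ (α - 2) := by
    rw [sq_rpow_aux]; ring_nf
  have hfun : (fun y : EuclideanSpace ℝ (Fin N) => (1 + ((‖y‖^2 : ℝ)) ^ (α/2)) ^ (γ/α))
      = (fun y : EuclideanSpace ℝ (Fin N) => (1 + ‖y‖ ^ α) ^ (γ / α)) := by
    funext y; rw [key y]
  rw [← hfun]
  convert h4 using 1
  any_goals rfl
  rw [key x, key2]
  ext v
  simp only [ContinuousLinearMap.smul_apply, ContinuousLinearMap.coe_smul', Pi.smul_apply,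
    smul_eq_mul]
  field_simp
  ring

example : True := trivial

-- value of first derivative in coordinate direction
lemma gval {N : ℕ} {α γ : ℝ} (hα : 2 < α)
    (φ : EuclideanSpace ℝ (Fin N) → ℝ) (hφ : ∀ x, φ x = (1 + ‖x‖ ^ α) ^ (γ / α))
    (y : EuclideanSpace ℝ (Fin N)) (i : Fin N) :
    fderiv ℝ φ y (EuclideanSpace.single i (1:ℝ))
      = γ * ‖y‖ ^ (α - 2) * (1 + ‖y‖ ^ α) ^ (γ / α - 1) * y i := by
  have hfn : φ = fun y : EuclideanSpace ℝ (Fin N) => (1 + ‖y‖ ^ α) ^ (γ / α) := funext hφ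
  rw [hfn, (phi_hasFDerivAt hα y).fderiv]
  simp only [ContinuousLinearMap.smul_apply, smul_eq_mul, innerSL_apply_apply]
  rw [EuclideanSpace.inner_single_right]
  simp

-- second derivative at nonzero points
lemma fderiv_g_apply {N : ℕ} {α γ : ℝ} (hα : 2 < α)
    (x : EuclideanSpace ℝ (Fin N)) (hx : x ≠ 0) (i : Fin N) :
    fderiv ℝ (fun y : EuclideanSpace ℝ (Fin N) =>
        γ * ‖y‖ ^ (α - 2) * (1 + ‖y‖ ^ α) ^ (γ / α - 1) * y i) x
      (EuclideanSpace.single i (1:ℝ))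
    = (γ * (α - 2) * ‖x‖ ^ (α - 4) * (1 + ‖x‖ ^ α) ^ (γ / α - 1)
        + γ * (γ - α) * ‖x‖ ^ (α - 2) * ‖x‖ ^ (α - 2) * (1 + ‖x‖ ^ α) ^ (γ / α - 2)) * (x i) ^ 2
      + γ * ‖x‖ ^ (α - 2) * (1 + ‖x‖ ^ α) ^ (γ / α - 1) := by
  have hα0 : (0:ℝ) < α := by linarith
  have hr : (0:ℝ) < ‖x‖ := norm_pos_iff.mpr hx
  have ht : (0:ℝ) < ‖x‖ ^ 2 := by positivity
  -- k(t) = γ * t^(α/2-1) * (1+t^(α/2))^(γ/α-1)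
  set k : ℝ → ℝ := fun t => γ * t ^ (α/2 - 1) * (1 + t ^ (α/2)) ^ (γ/α - 1) with hk
  have hpos : (0:ℝ) < 1 + ((‖x‖^2 : ℝ)) ^ (α/2) := by positivity
  -- derivative of k at t = ‖x‖²
  have hk1 : HasDerivAt (fun t : ℝ => t ^ (α/2 - 1))
      ((α/2 - 1) * (‖x‖^2 : ℝ) ^ (α/2 - 1 - 1)) (‖x‖^2) :=
    Real.hasDerivAt_rpow_const (Or.inl ht.ne')
  have hk2 : HasDerivAt (fun t : ℝ => t ^ (α/2))
      ((α/2) * (‖x‖^2 : ℝ) ^ (α/2 - 1)) (‖x‖^2) :=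
    Real.hasDerivAt_rpow_const (Or.inl ht.ne')
  have hk3 : HasDerivAt (fun s : ℝ => s ^ (γ/α - 1))
      ((γ/α - 1) * (1 + (‖x‖^2 : ℝ) ^ (α/2)) ^ (γ/α - 1 - 1)) (1 + (‖x‖^2 : ℝ) ^ (α/2)) :=
    Real.hasDerivAt_rpow_const (Or.inl hpos.ne')
  have hk4 : HasDerivAt (fun t : ℝ => (1 + t ^ (α/2)) ^ (γ/α - 1))
      ((γ/α - 1) * (1 + (‖x‖^2 : ℝ) ^ (α/2)) ^ (γ/α - 1 - 1) * ((α/2) * (‖x‖^2 : ℝ) ^ (α/2 - 1)))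
      (‖x‖^2) := by have := hk3.comp (‖x‖^2) (hk2.const_add 1); exact this
  have hkd : HasDerivAt k
      (γ * ((α/2 - 1) * (‖x‖^2 : ℝ) ^ (α/2 - 1 - 1)) * (1 + (‖x‖^2 : ℝ) ^ (α/2)) ^ (γ/α - 1)
        + γ * (‖x‖^2 : ℝ) ^ (α/2 - 1) *
          ((γ/α - 1) * (1 + (‖x‖^2 : ℝ) ^ (α/2)) ^ (γ/α - 1 - 1)
            * ((α/2) * (‖x‖^2 : ℝ) ^ (α/2 - 1)))) (‖x‖^2) := by
    exact (hk1.const_mul γ).mul hk4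
  -- fderiv of y ↦ ‖y‖²
  have hq : HasFDerivAt (fun y : EuclideanSpace ℝ (Fin N) => ‖y‖ ^ 2)
      (2 • (innerSL ℝ x)) x := (hasStrictFDerivAt_norm_sq x).hasFDerivAt
  have hkq := hkd.comp_hasFDerivAt x hq
  -- coordinate projection
  have hproj : HasFDerivAt (fun y : EuclideanSpace ℝ (Fin N) => y i)
      (EuclideanSpace.proj (𝕜 := ℝ) i) x := (EuclideanSpace.proj (𝕜 := ℝ) i).hasFDerivAt
  have hmul := hkq.mul hproj
  -- the function equals our target function
  have hfun : (fun y : EuclideanSpace ℝ (Fin N) => (k ∘ fun y : EuclideanSpace ℝ (Fin N) => ‖y‖^2) y * y i)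
      = (fun y : EuclideanSpace ℝ (Fin N) =>
          γ * ‖y‖ ^ (α - 2) * (1 + ‖y‖ ^ α) ^ (γ / α - 1) * y i) := by
    funext y
    simp only [hk, Function.comp]
    rw [sq_rpow_aux y (α/2 - 1), sq_rpow_aux y (α/2)]
    ring_nf
  rw [← hfun, HasFDerivAt.fderiv (f := fun y : EuclideanSpace ℝ (Fin N) => (k ∘ fun y : EuclideanSpace ℝ (Fin N) => ‖y‖^2) y * y i) hmul]
  have happ : ((2 • (innerSL ℝ x)) : EuclideanSpace ℝ (Fin N) →L[ℝ] ℝ)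
      (EuclideanSpace.single i (1:ℝ)) = 2 * x i := by
    simp only [ContinuousLinearMap.smul_apply, innerSL_apply_apply, smul_eq_mul]
    rw [EuclideanSpace.inner_single_right]
    simp
  have hproj1 : (EuclideanSpace.proj (𝕜 := ℝ) i) (EuclideanSpace.single i (1:ℝ)) = 1 := by
    simp
  simp only [ContinuousLinearMap.add_apply, ContinuousLinearMap.smul_apply,
    ContinuousLinearMap.coe_comp', Function.comp_apply, smul_eq_mul]
  rw [hproj1]
  rw [nsmul_eq_mul] ; rw [innerSL_apply_apply, EuclideanSpace.inner_single_right]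
  simp only [conj_trivial, one_mul, mul_one]
  -- now a pure real computation
  have e1 : ((‖x‖^2 : ℝ)) ^ (α/2) = ‖x‖ ^ α := by rw [sq_rpow_aux]; ring_nf
  have e2 : ((‖x‖^2 : ℝ)) ^ (α/2 - 1) = ‖x‖ ^ (α - 2) := by rw [sq_rpow_aux]; ring_nf
  have e3 : ((‖x‖^2 : ℝ)) ^ (α/2 - 1 - 1) = ‖x‖ ^ (α - 4) := by
    rw [sq_rpow_aux]; ring_nf
  have e4 : ‖x‖ ^ (α - 2) * ‖x‖ ^ (α - 2) = ‖x‖ ^ (2 * α - 4) := by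
    rw [← Real.rpow_add hr]; ring_nf
  rw [e1, e2, e3]
  have hP : (0:ℝ) < 1 + ‖x‖ ^ α := by positivity
  rw [show γ/α - 1 - 1 = γ/α - 2 by ring]
  set P := (1 + ‖x‖ ^ α) ^ (γ/α - 1)
  set Q := (1 + ‖x‖ ^ α) ^ (γ/α - 2)
  have hα2 : α ≠ 0 := by linarith
  have ek : k (‖x‖ ^ 2) = γ * ‖x‖ ^ (α - 2) * P := by
    simp only [hk]; rw [e1, e2]
  rw [ek]
  have hinv : α * α⁻¹ = 1 := mul_inv_cancel₀ hα2
  push_cast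
  linear_combination (γ^2 * (‖x‖ ^ (α - 2))^2 * x i ^ 2 * Q) * hinv

-- second derivative at zero
lemma fderiv_g_zero {N : ℕ} {α γ : ℝ} (hα : 2 < α) (hγ1 : γ / α - 1 ≤ 0) (i : Fin N) :
    HasFDerivAt (fun y : EuclideanSpace ℝ (Fin N) =>
        γ * ‖y‖ ^ (α - 2) * (1 + ‖y‖ ^ α) ^ (γ / α - 1) * y i)
      (0 : EuclideanSpace ℝ (Fin N) →L[ℝ] ℝ) 0 := by
  rw [hasFDerivAt_iff_isLittleO_nhds_zero]
  have hzero : γ * ‖(0 : EuclideanSpace ℝ (Fin N))‖ ^ (α - 2)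
      * (1 + ‖(0 : EuclideanSpace ℝ (Fin N))‖ ^ α) ^ (γ / α - 1)
      * (0 : EuclideanSpace ℝ (Fin N)) i = 0 := by
    simp
  rw [Asymptotics.isLittleO_iff]
  intro c hc
  have htend : Filter.Tendsto (fun y : EuclideanSpace ℝ (Fin N) => |γ| * ‖y‖ ^ (α - 2))
      (nhds 0) (nhds (|γ| * (0:ℝ) ^ (α - 2))) := by
    exact (((Real.continuousAt_rpow_const 0 (α-2) (Or.inr (by linarith))).tendsto).comp
      tendsto_norm_zero).const_mul |γ|
  rw [Real.zero_rpow (by linarith : α - 2 ≠ 0), mul_zero] at htend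
  filter_upwards [htend.eventually_le_const hc] with y hy
  simp only [zero_add, hzero, sub_zero, ContinuousLinearMap.zero_apply]
  have h1 : (0:ℝ) ≤ ‖y‖ ^ (α - 2) := Real.rpow_nonneg (norm_nonneg y) _
  have h2 : (0:ℝ) ≤ (1 + ‖y‖ ^ α) ^ (γ / α - 1) :=
    Real.rpow_nonneg (by positivity) _
  have h3 : (1 + ‖y‖ ^ α) ^ (γ / α - 1) ≤ 1 :=
    Real.rpow_le_one_of_one_le_of_nonpos
      (by nlinarith [Real.rpow_nonneg (norm_nonneg y) α]) hγ1
  have h4 : |y i| ≤ ‖y‖ := abs_apply_le y i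
  have h5 : |γ * ‖y‖ ^ (α - 2) * (1 + ‖y‖ ^ α) ^ (γ / α - 1) * y i|
      = |γ| * ‖y‖ ^ (α - 2) * (1 + ‖y‖ ^ α) ^ (γ / α - 1) * |y i| := by
    rw [abs_mul, abs_mul, abs_mul, abs_of_nonneg h1, abs_of_nonneg h2]
  rw [Real.norm_eq_abs, h5]
  have h6 : (0:ℝ) ≤ |γ| * ‖y‖ ^ (α - 2) := by positivity
  calc |γ| * ‖y‖ ^ (α - 2) * (1 + ‖y‖ ^ α) ^ (γ / α - 1) * |y i|
      ≤ |γ| * ‖y‖ ^ (α - 2) * 1 * ‖y‖ := by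
        apply mul_le_mul
        · exact mul_le_mul_of_nonneg_left h3 h6
        · exact h4
        · exact abs_nonneg _
        · nlinarith
    _ ≤ c * ‖y‖ := by
        rw [mul_one]
        exact mul_le_mul_of_nonneg_right hy (norm_nonneg y)

-- scalar bound
lemma scalar_bound {α β C : ℝ} (hα : 2 < α) (hβ : α - 2 < β) (hC : 0 < C) (r : ℝ) (hr : 0 ≤ r) :
    C * r ^ (α - 2) - r ^ β ≤ C * (max 1 (C ^ (1 / (β - α + 2)))) ^ (α - 2) + 1 := by
  set M : ℝ := max 1 (C ^ (1 / (β - α + 2))) with hM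
  have hM1 : (1:ℝ) ≤ M := le_max_left _ _
  have hMpos : (0:ℝ) < M := by linarith
  have hrb : (0:ℝ) ≤ r ^ β := Real.rpow_nonneg hr _
  have hMnn : (0:ℝ) ≤ C * M ^ (α - 2) := by
    have := Real.rpow_nonneg hMpos.le (α - 2); positivity
  rcases le_total r M with h | h
  · have : r ^ (α - 2) ≤ M ^ (α - 2) := Real.rpow_le_rpow hr h (by linarith)
    nlinarith
  · -- r ≥ M ≥ 1
    have hr1 : (1:ℝ) ≤ r := le_trans hM1 h
    have hr0 : (0:ℝ) < r := by linarith
    have he : (0:ℝ) < β - α + 2 := by linarith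
    have hCe : C ^ (1 / (β - α + 2)) ≤ r := le_trans (le_max_right _ _) h
    have hCr : C ≤ r ^ (β - α + 2) := by
      have h1 : (C ^ (1 / (β - α + 2))) ^ (β - α + 2) ≤ r ^ (β - α + 2) :=
        Real.rpow_le_rpow (Real.rpow_nonneg hC.le _) hCe he.le
      rwa [← Real.rpow_mul hC.le, one_div, inv_mul_cancel₀ he.ne', Real.rpow_one] at h1
    have key : C * r ^ (α - 2) ≤ r ^ β := by
      calc C * r ^ (α - 2) ≤ r ^ (β - α + 2) * r ^ (α - 2) :=
            mul_le_mul_of_nonneg_right hCr (Real.rpow_nonneg hr _)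
        _ = r ^ β := by rw [← Real.rpow_add hr0]; ring_nf
    nlinarith

theorem stmt2 (N : ℕ) (hN : 1 ≤ N) (α β γ : ℝ) (hα : 2 < α) (hβ : α - 2 < β)
    (hγ : γ < -(N : ℝ) / 2 + α / 2)
    (φ Aφ : EuclideanSpace ℝ (Fin N) → ℝ)
    (hφ : ∀ x, φ x = (1 + ‖x‖ ^ α) ^ (γ / α))
    (hAφ : ∀ x, Aφ x =
      (1 + ‖x‖ ^ α) *
        (∑ i : Fin N,
          fderiv ℝ (fun y => fderiv ℝ φ y (EuclideanSpace.single i (1 : ℝ))) x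
            (EuclideanSpace.single i (1 : ℝ)))
        - ‖x‖ ^ β * φ x) :
    ∃ κ : ℝ, 0 < κ ∧ ∀ x, Aφ x ≤ κ * φ x := by
  have hα0 : (0:ℝ) < α := by linarith
  have hN0 : (1:ℝ) ≤ (N:ℝ) := by exact_mod_cast hN
  have hγα : γ < α := by linarith
  have hγ1 : γ / α - 1 ≤ 0 := by
    have : γ / α ≤ 1 := by
      rcases le_or_gt γ 0 with h | h
      · have : γ / α ≤ 0 := div_nonpos_of_nonpos_of_nonneg h hα0.le
        linarith
      · exact (div_le_one hα0).mpr hγα.le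
    linarith
  set C : ℝ := |γ| * (α - 2 + N) + |γ| * |γ - α| + 1 with hCdef
  have hCpos : (0:ℝ) < C := by
    have h1 : (0:ℝ) ≤ |γ| * (α - 2 + N) := mul_nonneg (abs_nonneg _) (by linarith)
    have h2 : (0:ℝ) ≤ |γ| * |γ - α| := mul_nonneg (abs_nonneg _) (abs_nonneg _)
    rw [hCdef]; linarith
  set M : ℝ := max 1 (C ^ (1 / (β - α + 2))) with hMdef
  have hM1 : (1:ℝ) ≤ M := le_max_left _ _
  set κ : ℝ := C * M ^ (α - 2) + 1 with hκdef
  have hMnn : (0:ℝ) ≤ C * M ^ (α - 2) := by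
    have := Real.rpow_nonneg (by linarith : (0:ℝ) ≤ M) (α - 2)
    positivity
  have hκpos : (0:ℝ) < κ := by rw [hκdef]; linarith
  refine ⟨κ, hκpos, fun x => ?_⟩
  have hφx : (0:ℝ) < φ x := by
    rw [hφ x]
    have : (0:ℝ) ≤ ‖x‖ ^ α := Real.rpow_nonneg (norm_nonneg x) _
    exact Real.rpow_pos_of_pos (by linarith) _
  have hgfun : ∀ i : Fin N,
      (fun y : EuclideanSpace ℝ (Fin N) => fderiv ℝ φ y (EuclideanSpace.single i (1:ℝ)))
      = (fun y : EuclideanSpace ℝ (Fin N) =>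
          γ * ‖y‖ ^ (α - 2) * (1 + ‖y‖ ^ α) ^ (γ / α - 1) * y i) :=
    fun i => funext (fun y => gval hα φ hφ y i)
  rw [hAφ x]
  by_cases hx : x = 0
  · subst hx
    have hz : ∀ i : Fin N,
        fderiv ℝ (fun y : EuclideanSpace ℝ (Fin N) =>
          fderiv ℝ φ y (EuclideanSpace.single i (1:ℝ))) 0 (EuclideanSpace.single i (1:ℝ)) = 0 := by
      intro i
      rw [hgfun i, (fderiv_g_zero hα hγ1 i).fderiv]
      simp
    rw [Finset.sum_congr rfl (fun i _ => hz i), Finset.sum_const_zero, mul_zero]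
    have h0 : ‖(0 : EuclideanSpace ℝ (Fin N))‖ ^ β = 0 := by
      rw [norm_zero, Real.zero_rpow (by linarith : β ≠ 0)]
    rw [h0, zero_mul, zero_sub, neg_zero]
    positivity
  · -- nonzero case
    have hr : (0:ℝ) < ‖x‖ := norm_pos_iff.mpr hx
    have hPw : (0:ℝ) < 1 + ‖x‖ ^ α := by positivity
    set r : ℝ := ‖x‖ with hrdef
    set P1 : ℝ := (1 + r ^ α) ^ (γ / α - 1) with hP1
    set P2 : ℝ := (1 + r ^ α) ^ (γ / α - 2) with hP2
    have hsummand : ∀ i : Fin N,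
        fderiv ℝ (fun y : EuclideanSpace ℝ (Fin N) =>
          fderiv ℝ φ y (EuclideanSpace.single i (1:ℝ))) x (EuclideanSpace.single i (1:ℝ))
        = (γ * (α - 2) * r ^ (α - 4) * P1
            + γ * (γ - α) * r ^ (α - 2) * r ^ (α - 2) * P2) * (x i) ^ 2
          + γ * r ^ (α - 2) * P1 := by
      intro i
      rw [hgfun i]
      exact fderiv_g_apply hα x hx i
    rw [Finset.sum_congr rfl (fun i _ => hsummand i)]
    rw [Finset.sum_add_distrib, Finset.sum_const, ← Finset.mul_sum]
    have hsum : ∑ i : Fin N, (x i) ^ 2 = r ^ 2 := by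
      rw [hrdef, EuclideanSpace.norm_eq, Real.sq_sqrt (by positivity)]
      exact Finset.sum_congr rfl (fun i _ => by rw [Real.norm_eq_abs, sq_abs])
    rw [hsum]
    simp only [Finset.card_univ, Fintype.card_fin, nsmul_eq_mul]
    -- rpow algebra
    have er2 : (r ^ 2 : ℝ) = r ^ (2:ℝ) := by
      rw [← Real.rpow_natCast r 2]; norm_num
    have e1 : r ^ (α - 4) * r ^ 2 = r ^ (α - 2) := by
      rw [er2, ← Real.rpow_add hr]; ring_nf
    have e2 : r ^ (α - 2) * r ^ 2 = r ^ α := by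
      rw [er2, ← Real.rpow_add hr]; ring_nf
    have eP1 : (1 + r ^ α) * P1 = φ x := by
      rw [hP1, hφ x, Real.rpow_sub hPw, Real.rpow_one]
      field_simp
      rfl
    have eP2 : (1 + r ^ α) * P2 = P1 := by
      rw [hP1, hP2, Real.rpow_sub hPw, Real.rpow_sub hPw, Real.rpow_one,
        show (2:ℝ) = 1 + 1 by norm_num, Real.rpow_add hPw, Real.rpow_one]
      field_simp
    -- nonnegativity facts
    have hB : (0:ℝ) ≤ r ^ (α - 2) := Real.rpow_nonneg hr.le _
    have hra : (0:ℝ) ≤ r ^ α := Real.rpow_nonneg hr.le _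
    have hP1n : (0:ℝ) ≤ P1 := Real.rpow_nonneg hPw.le _
    have hP2n : (0:ℝ) ≤ P2 := Real.rpow_nonneg hPw.le _
    have hrb : (0:ℝ) ≤ r ^ β := Real.rpow_nonneg hr.le _
    -- key bound on the diffusion part
    have hkey : (1 + r ^ α) *
        ((γ * (α - 2) * r ^ (α - 4) * P1 + γ * (γ - α) * r ^ (α - 2) * r ^ (α - 2) * P2) * r ^ 2
          + (N:ℝ) * (γ * r ^ (α - 2) * P1))
        ≤ (C - 1) * r ^ (α - 2) * φ x := by
      have expand : (1 + r ^ α) *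
          ((γ * (α - 2) * r ^ (α - 4) * P1 + γ * (γ - α) * r ^ (α - 2) * r ^ (α - 2) * P2) * r ^ 2
            + (N:ℝ) * (γ * r ^ (α - 2) * P1))
          = γ * (α - 2 + N) * r ^ (α - 2) * ((1 + r ^ α) * P1)
            + γ * (γ - α) * r ^ (α - 2) * (r ^ α * ((1 + r ^ α) * P2)) := by
        linear_combination ((1 + r ^ α) * γ * (α - 2) * P1) * e1
          + ((1 + r ^ α) * γ * (γ - α) * r ^ (α - 2) * P2) * e2
      rw [expand, eP1, eP2]
      have hterm1 : γ * (α - 2 + N) * r ^ (α - 2) * φ x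
          ≤ |γ| * (α - 2 + N) * r ^ (α - 2) * φ x := by
        have h1 : γ * (α - 2 + N) ≤ |γ| * (α - 2 + N) :=
          mul_le_mul_of_nonneg_right (le_abs_self γ) (by linarith)
        exact mul_le_mul_of_nonneg_right (mul_le_mul_of_nonneg_right h1 hB) hφx.le
      have hterm2 : γ * (γ - α) * r ^ (α - 2) * (r ^ α * P1)
          ≤ |γ| * |γ - α| * r ^ (α - 2) * φ x := by
        have h1 : γ * (γ - α) ≤ |γ| * |γ - α| := by
          rw [← abs_mul]; exact le_abs_self _
        have h3 : r ^ α * P1 ≤ φ x := by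
          rw [← eP1]
          exact mul_le_mul_of_nonneg_right (by linarith) hP1n
        have h4 : (0:ℝ) ≤ r ^ α * P1 := mul_nonneg hra hP1n
        have h5 : (0:ℝ) ≤ |γ| * |γ - α| := mul_nonneg (abs_nonneg _) (abs_nonneg _)
        calc γ * (γ - α) * r ^ (α - 2) * (r ^ α * P1)
            ≤ |γ| * |γ - α| * r ^ (α - 2) * (r ^ α * P1) :=
              mul_le_mul_of_nonneg_right (mul_le_mul_of_nonneg_right h1 hB) h4
          _ ≤ |γ| * |γ - α| * r ^ (α - 2) * φ x :=
              mul_le_mul_of_nonneg_left h3 (mul_nonneg h5 hB)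
      have : (C - 1) * r ^ (α - 2) * φ x
          = |γ| * (α - 2 + N) * r ^ (α - 2) * φ x + |γ| * |γ - α| * r ^ (α - 2) * φ x := by
        rw [hCdef]; ring
      linarith
    have hscal : C * r ^ (α - 2) - r ^ β ≤ κ :=
      scalar_bound hα hβ hCpos r hr.le
    have hfinal : (C * r ^ (α - 2) - r ^ β) * φ x ≤ κ * φ x :=
      mul_le_mul_of_nonneg_right hscal hφx.le
    have hBφ : (0:ℝ) ≤ r ^ (α - 2) * φ x := mul_nonneg hB hφx.le
    linarith [hkey, hfinal, hBφ]
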